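/- arXiv:2410.14460 — 4 statements merged into one kernel-verified Lean document; each statement's English description precedes it below -/
import Mathlib

section
/- Let α : F ⇒ G be a natural transformation between Set functors. The relational connector id_G • α, defined by (id_G • α)r = (id_G r) · α_X for r : X ⇸ Y, is the least relational connector F → G that extends α; in particular, id_G is the least relational connector G → G that extends the identity natural transformation on G. -/
open CategoryTheory

universe u

/-- A `Set` functor: a functor from the category of sets (types) to itself. -/
abbrev SetFunctor : Type (u + 1) := CategoryTheory.Functor (Type u) (Type u)

/-- Applicative-order composition of relations: `(rcomp s r) x z ↔ ∃ y, r x y ∧ s y z`,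
i.e. `s · r` in the notation of the paper. -/
def rcomp {X Y Z : Type u} (s : Y → Z → Prop) (r : X → Y → Prop) : X → Z → Prop :=
  fun x z => ∃ y, r x y ∧ s y z

/-- Relational converse `r°`. -/
def rconv {X Y : Type u} (r : X → Y → Prop) : Y → X → Prop := fun y x => r x y

/-- The graph of a function, identifying functions with relations. -/
def graph {X Y : Type u} (f : X → Y) : X → Y → Prop := fun x y => f x = y

/-- The diagonal relation `Δ_X`. -/
def diag (X : Type u) : X → X → Prop := fun x y => x = y

/-- Relational image `r[A]`. -/
def rimage {X Y : Type u} (r : X → Y → Prop) (A : Set X) : Set Y :=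
  {y | ∃ x ∈ A, r x y}

/-- The pointwise product of two `Set` functors. -/
def prodFunctor (F₁ F₂ : SetFunctor.{u}) : SetFunctor.{u} where
  obj X := F₁.obj X × F₂.obj X
  map f := TypeCat.ofHom (fun p => (F₁.map f p.1, F₂.map f p.2))
  map_id X := by ext p <;> simp
  map_comp f g := by ext p <;> simp

/-- An assignment of relations `F X ⇸ G Y` to relations `X ⇸ Y`; a relational connector
is such an assignment satisfying monotonicity and naturality (`RelConn.IsConnector`). -/
structure RelConn (F G : SetFunctor.{u}) : Type (u + 1) where
  rel : ∀ {X Y : Type u}, (X → Y → Prop) → F.obj X → G.obj Y → Prop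

namespace RelConn

variable {F G H V : SetFunctor.{u}}

/-- Monotonicity: `r₁ ⊆ r₂` implies `L r₁ ⊆ L r₂`. -/
def Mono (L : RelConn F G) : Prop :=
  ∀ (X Y : Type u) (r₁ r₂ : X → Y → Prop), (∀ x y, r₁ x y → r₂ x y) →
    ∀ a b, L.rel r₁ a b → L.rel r₂ a b

/-- Naturality: `L(g° · r · f) = (G g)° · L r · F f`. -/
def Natural (L : RelConn F G) : Prop :=
  ∀ (X X' Y Y' : Type u) (f : X' → X) (g : Y' → Y) (r : X → Y → Prop),
    L.rel (rcomp (rconv (graph g)) (rcomp r (graph f))) =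
      rcomp (rconv (graph (G.map (TypeCat.ofHom g)))) (rcomp (L.rel r) (graph (F.map (TypeCat.ofHom f))))

/-- A relational connector: a monotone and natural assignment of relations. -/
def IsConnector (L : RelConn F G) : Prop := L.Mono ∧ L.Natural

/-- The pointwise order on connectors: `L ≤ K` iff `L r ⊆ K r` for all `r`. -/
def le (L K : RelConn F G) : Prop :=
  ∀ (X Y : Type u) (r : X → Y → Prop) (a : F.obj X) (b : G.obj Y), L.rel r a b → K.rel r a b

/-- The composite `L · K` of relational connectors:
`(L · K) r = ⋃ { L s · K t | s · t = r }`, the join over all factorizations of `r`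
through an arbitrary intermediate set `Y`. -/
def comp (L : RelConn G H) (K : RelConn F G) : RelConn F H where
  rel := fun {X Z} r a c => ∃ (Y : Type u) (t : X → Y → Prop) (s : Y → Z → Prop),
    rcomp s t = r ∧ ∃ b, K.rel t a b ∧ L.rel s b c

/-- The converse `L°` of a connector: `L° r = (L (r°))°`. -/
def conv (L : RelConn F G) : RelConn G F where
  rel := fun {X Y} r b a => L.rel (rconv r) a b

/-- The meet (pointwise intersection) of two connectors. -/
def meet (L K : RelConn F G) : RelConn F G where
  rel := fun {X Y} r a b => L.rel r a b ∧ K.rel r a b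

/-- The product `L₁ × L₂` of connectors. -/
def prod {F₁ F₂ G₁ G₂ : SetFunctor.{u}} (L₁ : RelConn F₁ G₁) (L₂ : RelConn F₂ G₂) :
    RelConn (prodFunctor F₁ F₂) (prodFunctor G₁ G₂) where
  rel := fun {X Y} r p q => L₁.rel r p.1 q.1 ∧ L₂.rel r p.2 q.2

/-- The identity relational connector `id_F`: `b (id_F r) c` iff for all set functors `G`,
all relational connectors `L : G → F`, all `s : Z ⇸ X` and `a ∈ G Z`,
`a (L s) b` implies `a (L (r · s)) c`. -/
def id (F : SetFunctor.{u}) : RelConn F F where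
  rel := fun {X Y} r b c =>
    ∀ (G : SetFunctor.{u}) (L : RelConn G F), L.IsConnector →
      ∀ (Z : Type u) (s : Z → X → Prop) (a : G.obj Z),
        L.rel s a b → L.rel (rcomp r s) a c

/-- A connector `L : F → F` is transitive if `L · L ≤ L`. -/
def Transitive (L : RelConn F F) : Prop := (L.comp L).le L

/-- A connector `L : F → F` is symmetric if `L° ≤ L`. -/
def Symmetric (L : RelConn F F) : Prop := L.conv.le L

/-- A connector `L : F → F` extends `F` if `Δ_{F X} ⊆ L Δ_X` for all `X`. -/
def ExtendsF (L : RelConn F F) : Prop :=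
  ∀ (X : Type u) (a b : F.obj X), diag (F.obj X) a b → L.rel (diag X) a b

/-- Condition (L2) of lax extensions: `L s · L r ⊆ L (s · r)`. -/
def LaxL2 (L : RelConn F F) : Prop :=
  ∀ (X Y Z : Type u) (r : X → Y → Prop) (s : Y → Z → Prop) (a : F.obj X) (c : F.obj Z),
    rcomp (L.rel s) (L.rel r) a c → L.rel (rcomp s r) a c

/-- Condition (L3) of lax extensions: `F f ⊆ L f` and `(F f)° ⊆ L (f°)`. -/
def LaxL3 (L : RelConn F F) : Prop :=
  ∀ (X Y : Type u) (f : X → Y),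
    (∀ a b, graph (F.map (TypeCat.ofHom f)) a b → L.rel (graph f) a b) ∧
    (∀ b a, rconv (graph (F.map (TypeCat.ofHom f))) b a → L.rel (rconv (graph f)) b a)

/-- A lax extension of `F`: an assignment of relations satisfying (L1) monotonicity,
(L2) and (L3). -/
def IsLaxExtension (L : RelConn F F) : Prop := L.Mono ∧ L.LaxL2 ∧ L.LaxL3

/-- A connector `L : F → G` extends a natural transformation `α : F ⇒ G` if the graph of
`α_X` is contained in `L Δ_X` for all sets `X`. -/
def Extends (L : RelConn F G) (α : F ⟶ G) : Prop :=
  ∀ (X : Type u) (a : F.obj X) (b : G.obj X), graph (α.app X) a b → L.rel (diag X) a b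

end RelConn

/-- The connector `id_G • α` obtained from a natural transformation `α : F ⇒ G`:
`(id_G • α) r = (id_G r) · α_X`. -/
def idBullet {F G : SetFunctor.{u}} (α : F ⟶ G) : RelConn F G where
  rel := fun {X Y} r => rcomp ((RelConn.id G).rel r) (graph (α.app X))

/-- The intermediate set of the couniversal factorization of `r : X ⇸ Z`:
`{(A,B) ∈ P(X) × P(Z) | A × B ⊆ r}`. -/
def CoInt {X Z : Type u} (r : X → Z → Prop) : Type u :=
  {p : Set X × Set Z // ∀ x ∈ p.1, ∀ z ∈ p.2, r x z}

/-- The first leg `t = {(x,(A,B)) | x ∈ A}` of the couniversal factorization. -/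
def coT {X Z : Type u} (r : X → Z → Prop) : X → CoInt r → Prop := fun x p => x ∈ p.1.1

/-- The second leg `s = {((A,B),z) | z ∈ B}` of the couniversal factorization. -/
def coS {X Z : Type u} (r : X → Z → Prop) : CoInt r → Z → Prop := fun p z => z ∈ p.1.2

/-- `f : (C,γ) → (D,δ)` is a morphism of `F`-coalgebras: `F f ∘ γ = δ ∘ f`. -/
def IsCoalgMor {F : SetFunctor.{u}} {C D : Type u} (γ : C → F.obj C) (δ : D → F.obj D)
    (f : C → D) : Prop := ∀ x, F.map (TypeCat.ofHom f) (γ x) = δ (f x)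

/-- `r : C ⇸ D` is an `L`-simulation between the `F`-coalgebra `(C,γ)` and the
`G`-coalgebra `(D,δ)`: `x r y` implies `γ x (L r) δ y`. -/
def IsSim {F G : SetFunctor.{u}} (L : RelConn F G) {C D : Type u}
    (γ : C → F.obj C) (δ : D → G.obj D) (r : C → D → Prop) : Prop :=
  ∀ x y, r x y → L.rel r (γ x) (δ y)

/-- `L`-similarity: `x ≼_L y` iff some `L`-simulation relates `x` to `y`. -/
def SimilarL {F G : SetFunctor.{u}} (L : RelConn F G) {C D : Type u}
    (γ : C → F.obj C) (δ : D → G.obj D) : C → D → Prop :=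
  fun x y => ∃ r, IsSim L γ δ r ∧ r x y

/-- `r : C ⇸ D` is an `L`-bisimulation (for `L : F → F`): both `r` and `r°`
are `L`-simulations. -/
def IsBisim {F : SetFunctor.{u}} (L : RelConn F F) {C D : Type u}
    (γ : C → F.obj C) (δ : D → F.obj D) (r : C → D → Prop) : Prop :=
  IsSim L γ δ r ∧ IsSim L δ γ (rconv r)

/-- `L`-bisimilarity: `x ≃_L y` iff some `L`-bisimulation relates `x` to `y`. -/
def Bisimilar {F : SetFunctor.{u}} (L : RelConn F F) {C D : Type u}
    (γ : C → F.obj C) (δ : D → F.obj D) : C → D → Prop :=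
  fun x y => ∃ r, IsBisim L γ δ r ∧ r x y

/-- Heterogeneous `L`-bisimulation for `L : F → G`: `r` is an `L`-simulation and `r°`
is an `L°`-simulation. -/
def IsBisimHet {F G : SetFunctor.{u}} (L : RelConn F G) {C D : Type u}
    (γ : C → F.obj C) (δ : D → G.obj D) (r : C → D → Prop) : Prop :=
  IsSim L γ δ r ∧ IsSim L.conv δ γ (rconv r)

/-- Heterogeneous `L`-bisimilarity for `L : F → G`. -/
def BisimilarHet {F G : SetFunctor.{u}} (L : RelConn F G) {C D : Type u}
    (γ : C → F.obj C) (δ : D → G.obj D) : C → D → Prop :=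
  fun x y => ∃ r, IsBisimHet L γ δ r ∧ r x y

/-- An `n`-ary predicate lifting for a `Set` functor `F`: a natural transformation
`(2^(-))ⁿ ⇒ 2^(F -)` with the contravariant powerset functor. -/
structure PredLifting (F : SetFunctor.{u}) (n : ℕ) : Type (u + 1) where
  app : ∀ (X : Type u), (Fin n → Set X) → Set (F.obj X)
  natural : ∀ (X Y : Type u) (f : X → Y) (A : Fin n → Set Y) (a : F.obj X),
    F.map (TypeCat.ofHom f) a ∈ app Y A ↔ a ∈ app X (fun i => f ⁻¹' (A i))

/-- Monotonicity of a predicate lifting. -/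
def PredLifting.IsMonotone {F : SetFunctor.{u}} {n : ℕ} (lam : PredLifting F n) : Prop :=
  ∀ (X : Type u) (A B : Fin n → Set X), (∀ i, A i ⊆ B i) → lam.app X A ⊆ lam.app X B

/-- The dual predicate lifting `λ̄_X(A₁,…,Aₙ) = F X \ λ_X(X\A₁,…,X\Aₙ)`. -/
def PredLifting.dual {F : SetFunctor.{u}} {n : ℕ} (lam : PredLifting F n) :
    PredLifting F n where
  app X A := (lam.app X fun i => (A i)ᶜ)ᶜ
  natural := by
    intro X Y f A a
    simp only [Set.mem_compl_iff, lam.natural, Set.preimage_compl]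

/-- The Kantorovich connector `L_Λ` induced by an arity-preserving relation `Λ` between
monotone predicate liftings of `F` and of `G`: `a (L_Λ r) b` iff for every `n`-ary pair
`(λ,μ) ∈ Λ` and all `A₁,…,Aₙ ⊆ X`, `a ∈ λ_X(A₁,…,Aₙ)` implies `b ∈ μ_Y(r[A₁],…,r[Aₙ])`. -/
def kantorovich {F G : SetFunctor.{u}}
    (Λ : ∀ n : ℕ, PredLifting F n → PredLifting G n → Prop) : RelConn F G where
  rel := fun {X Y} r a b =>
    ∀ (n : ℕ) (lam : PredLifting F n) (mu : PredLifting G n), Λ n lam mu →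
      ∀ A : Fin n → Set X, a ∈ lam.app X A → b ∈ mu.app Y (fun i => rimage r (A i))

theorem rcomp_diag {X Y : Type u} (r : X → Y → Prop) : rcomp r (diag X) = r := by
  funext x z
  unfold rcomp diag
  apply propext
  constructor
  · rintro ⟨y, rfl, h⟩; exact h
  · intro h; exact ⟨x, rfl, h⟩

theorem diag_rcomp {X Y : Type u} (s : X → Y → Prop) : rcomp (diag Y) s = s := by
  funext x z
  unfold rcomp diag
  apply propext
  constructor
  · rintro ⟨y, h, rfl⟩; exact h
  · intro h; exact ⟨z, h, rfl⟩

theorem map_id_apply {H : SetFunctor.{u}} {W : Type u} (x : H.obj W) :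
    H.map (TypeCat.ofHom (id : W → W)) x = x := by
  have : TypeCat.ofHom (id : W → W) = 𝟙 W := rfl
  rw [this, H.map_id]; rfl

theorem push_f {H G : SetFunctor.{u}} (L : RelConn H G) (hL : L.IsConnector)
    {Z X' X : Type u} (f : X' → X) (s : Z → X' → Prop) (a : H.obj Z) (b : G.obj X')
    (h : L.rel s a b) : L.rel (rcomp (graph f) s) a (G.map (TypeCat.ofHom f) b) := by
  have hnat := hL.2 Z Z X X' (id : Z → Z) f (rcomp (graph f) s)
  have h1 : L.rel (rcomp (rconv (graph f))
      (rcomp (rcomp (graph f) s) (graph (id : Z → Z)))) a b := by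
    refine hL.1 _ _ s _ ?_ a b h
    intro z x' hs
    exact ⟨f x', ⟨z, rfl, ⟨x', hs, rfl⟩⟩, rfl⟩
  rw [hnat] at h1
  obtain ⟨y, ⟨m, hm, hrel⟩, hy⟩ := h1
  have hm' : a = m := by rw [← hm]; exact (map_id_apply a).symm
  have hy' : G.map (TypeCat.ofHom f) b = y := hy
  rw [hm'] ; rw [hy'] ; exact hrel

theorem pull_f {H G : SetFunctor.{u}} (L : RelConn H G) (hL : L.IsConnector)
    {Z X' X : Type u} (f : X' → X) (s : Z → X → Prop) (a : H.obj Z) (b : G.obj X')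
    (h : L.rel s a (G.map (TypeCat.ofHom f) b)) : L.rel (rcomp (rconv (graph f)) s) a b := by
  have hnat := hL.2 Z Z X X' (id : Z → Z) f s
  have h1 : L.rel (rcomp (rconv (graph f)) (rcomp s (graph (id : Z → Z)))) a b := by
    rw [hnat]
    exact ⟨G.map (TypeCat.ofHom f) b, ⟨a, map_id_apply a, h⟩, rfl⟩
  refine hL.1 _ _ _ _ ?_ a b h1
  rintro z x' ⟨m, ⟨z₀, hz, hs⟩, hf⟩
  have hz' : z = z₀ := hz
  exact ⟨m, hz' ▸ hs, hf⟩

theorem idConn_mono (G : SetFunctor.{u}) : (RelConn.id G).Mono := by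
  intro X Y r₁ r₂ hr a b h H L hL Z s c hs
  refine hL.1 _ _ _ _ ?_ _ _ (h H L hL Z s c hs)
  rintro z y ⟨x, hx, h12⟩
  exact ⟨x, hx, hr _ _ h12⟩

theorem idConn_nat_iff (G : SetFunctor.{u}) {X X' Y Y' : Type u}
    (f : X' → X) (g : Y' → Y) (r : X → Y → Prop) (b : G.obj X') (c : G.obj Y') :
    (RelConn.id G).rel (rcomp (rconv (graph g)) (rcomp r (graph f))) b c ↔
      (RelConn.id G).rel r (G.map (TypeCat.ofHom f) b) (G.map (TypeCat.ofHom g) c) := by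
  constructor
  · intro h H L hL Z s a hs
    have h1 := pull_f L hL f s a b hs
    have h2 := h H L hL Z _ a h1
    have h3 := push_f L hL g _ a c h2
    refine hL.1 _ _ _ _ ?_ a _ h3
    rintro z y ⟨y', ⟨x', ⟨m', hsm, rfl⟩, ⟨m, ⟨x₀, rfl, hr⟩, rfl⟩⟩, rfl⟩
    exact ⟨f x', hsm, hr⟩
  · intro h H L hL Z s a hs
    have h1 := push_f L hL f s a b hs
    have h2 := h H L hL Z (rcomp (graph f) s) a h1
    have h3 := pull_f L hL g _ a c h2
    refine hL.1 _ _ _ _ ?_ a c h3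
    rintro z y' ⟨m, ⟨x₀, ⟨x', hs', rfl⟩, hr⟩, hg⟩
    exact ⟨x', hs', ⟨m, ⟨f x', rfl, hr⟩, hg⟩⟩

theorem idConn_refl (G : SetFunctor.{u}) (X : Type u) (x : G.obj X) :
    (RelConn.id G).rel (diag X) x x := by
  intro H L hL Z s a hs
  rwa [diag_rcomp]

/-- for a natural transformation `α : F ⇒ G`, the connector `id_G • α`
(with `(id_G • α) r = (id_G r) · α_X`) is the least relational connector `F → G`
extending `α`; in particular `id_G` is the least relational connector extending the
identity natural transformation on `G`. -/
theorem idBullet_least_extending (F G : SetFunctor.{u}) (α : F ⟶ G) :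
    (idBullet α).IsConnector ∧ (idBullet α).Extends α ∧
      (∀ L : RelConn F G, L.IsConnector → L.Extends α → (idBullet α).le L) ∧
      ((RelConn.id G).Extends (CategoryTheory.CategoryStruct.id G) ∧
        ∀ L : RelConn G G, L.IsConnector →
          L.Extends (CategoryTheory.CategoryStruct.id G) → (RelConn.id G).le L) := by
  have hα : ∀ (X' X : Type u) (f : X' → X) (a' : F.obj X'),
      α.app X (F.map (TypeCat.ofHom f) a') = G.map (TypeCat.ofHom f) (α.app X' a') := by
    intro X' X f a'
    exact NatTrans.naturality_apply α (TypeCat.ofHom f) a'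
  refine ⟨⟨?_, ?_⟩, ?_, ?_, ?_, ?_⟩
  · -- Mono
    rintro X Y r₁ r₂ hr a b ⟨y, hy, hid⟩
    exact ⟨y, hy, idConn_mono G X Y r₁ r₂ hr _ _ hid⟩
  · -- Natural
    intro X X' Y Y' f g r
    funext a' b'
    apply propext
    constructor
    · rintro ⟨y, (rfl : α.app X' a' = y), hid⟩
      have h := (idConn_nat_iff G f g r (α.app X' a') b').mp hid
      refine ⟨G.map (TypeCat.ofHom g) b', ⟨F.map (TypeCat.ofHom f) a', rfl,
        ⟨α.app X (F.map (TypeCat.ofHom f) a'), rfl, ?_⟩⟩, rfl⟩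
      rw [hα X' X f a']
      exact h
    · rintro ⟨y, ⟨m, hm, ⟨k, hk, hid⟩⟩, hy⟩
      have hm' : F.map (TypeCat.ofHom f) a' = m := hm
      have hk' : α.app X m = k := hk
      have hy' : G.map (TypeCat.ofHom g) b' = y := hy
      subst hm' hk' hy'
      rw [hα X' X f a'] at hid
      exact ⟨α.app X' a', rfl, (idConn_nat_iff G f g r (α.app X' a') b').mpr hid⟩
  · -- Extends α
    rintro X a b (rfl : α.app X a = b)
    exact ⟨α.app X a, rfl, idConn_refl G X (α.app X a)⟩
  · -- least
    rintro L hL hext X Y r a c ⟨y, (rfl : α.app X a = y), hid⟩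
    have hd : L.rel (diag X) a (α.app X a) := hext X a (α.app X a) rfl
    have := hid F L hL X (diag X) a hd
    rwa [rcomp_diag] at this
  · -- id_G extends identity
    rintro X a b hab
    have : a = b := hab
    subst this
    exact idConn_refl G X a
  · -- id_G least
    intro L hL hext X Y r b c hid
    have hd : L.rel (diag X) b b := hext X b b rfl
    have := hid G L hL X (diag X) b hd
    rwa [rcomp_diag] at this
end

section
/- Transfer of bisimilarity: let K : F → F, L : F → G, and H : G → G be relational connectors between Set functors such that L · K · L° ≤ H. Then for all coalgebras, ≼_L ∘ ≼_K ∘ (≼_L)° ⊆ ≼_H and ≃_L ∘ ≃_K ∘ (≃_L)° ⊆ ≃_H; that is, if c' ≼_L d', c ≼_K c', and c ≼_L d (with c,c' states of F-coalgebras and d,d' states of G-coalgebras, using the converse appropriately), then d ≼_H d', and likewise for bisimilarity. -/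
open CategoryTheory

universe u

/-- `L`-similarity: `x ≼_L y` iff some `L`-simulation relates `x` to `y`. -/
def CoalgSimilar {F G : SetFunctor.{u}} (L : RelConn F G) {C D : Type u}
    (γ : C → F.obj C) (δ : D → G.obj D) : C → D → Prop :=
  fun x y => ∃ r, IsSim L γ δ r ∧ r x y

/-- transfer of (bi)similarity: if `L · K · L° ≤ H`, then
`≼_L ∘ ≼_K ∘ (≼_L)° ⊆ ≼_H` and `≃_L ∘ ≃_K ∘ (≃_L)° ⊆ ≃_H`; elementwise, if
`c ≼_L d`, `c ≼_K c'` and `c' ≼_L d'`, then `d ≼_H d'`, and likewise for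
bisimilarity. -/
theorem transfer_of_bisimilarity (F G : SetFunctor.{u})
    (K : RelConn F F) (L : RelConn F G) (H : RelConn G G)
    (hK : K.IsConnector) (hL : L.IsConnector) (hH : H.IsConnector)
    (hle : ((L.comp K).comp L.conv).le H)
    (C C' D D' : Type u) (γ : C → F.obj C) (γ' : C' → F.obj C')
    (δ : D → G.obj D) (δ' : D' → G.obj D') :
    (∀ (c : C) (c' : C') (d : D) (d' : D'),
      CoalgSimilar L γ δ c d → CoalgSimilar K γ γ' c c' → CoalgSimilar L γ' δ' c' d' →
        CoalgSimilar H δ δ' d d') ∧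
    (∀ (c : C) (c' : C') (d : D) (d' : D'),
      BisimilarHet L γ δ c d → Bisimilar K γ γ' c c' → BisimilarHet L γ' δ' c' d' →
        Bisimilar H δ δ' d d') := by
  constructor
  · rintro c c' d d' ⟨r1, hs1, h1⟩ ⟨r2, hs2, h2⟩ ⟨r3, hs3, h3⟩
    refine ⟨rcomp (rcomp r3 r2) (rconv r1), ?_, ⟨c, h1, c', h2, h3⟩⟩
    rintro d d' ⟨c, h1, c', h2, h3⟩
    exact hle _ _ _ _ _ ⟨C, rconv r1, rcomp r3 r2, rfl,
      γ c, hs1 c d h1, C', r2, r3, rfl, γ' c', hs2 c c' h2, hs3 c' d' h3⟩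
  · rintro c c' d d' ⟨r1, ⟨hs1, hs1'⟩, h1⟩ ⟨r2, ⟨hs2, hs2'⟩, h2⟩ ⟨r3, ⟨hs3, hs3'⟩, h3⟩
    refine ⟨rcomp (rcomp r3 r2) (rconv r1), ⟨?_, ?_⟩, ⟨c, h1, c', h2, h3⟩⟩
    · rintro d d' ⟨c, h1, c', h2, h3⟩
      exact hle _ _ _ _ _ ⟨C, rconv r1, rcomp r3 r2, rfl,
        γ c, hs1 c d h1, C', r2, r3, rfl, γ' c', hs2 c c' h2, hs3 c' d' h3⟩
    · rintro d' d ⟨c, h1, c', h2, h3⟩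
      refine hle _ _ _ _ _ ⟨C', rconv r3, rcomp r1 (rconv r2), ?_,
        γ' c', hs3 c' d' h3, C, rconv r2, r1, rfl,
        γ c, hs2' c' c h2, hs1 c d h1⟩
      funext x z
      apply propext
      constructor
      · rintro ⟨c1, hc1, c0, hc2, hc3⟩
        exact ⟨c0, hc3, c1, hc2, hc1⟩
      · rintro ⟨c0, hc3, c1, hc2, hc1⟩
        exact ⟨c1, hc1, c0, hc2, hc3⟩
end

section
/- Kantorovich relational connectors are relational connectors: for Set functors F, G and an arity-preserving relation Λ between monotone predicate liftings of F and monotone predicate liftings of G, the assignment L_Λ, defined by a (L_Λ r) b iff for every n-ary pair (λ,μ) ∈ Λ and all subsets A₁,…,Aₙ ⊆ X, a ∈ λ_X(A₁,…,Aₙ) implies b ∈ μ_Y(r[A₁],…,r[Aₙ]), satisfies monotonicity and naturality. -/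
open CategoryTheory

universe u

/-- `L`-similarity: `x ≼_L y` iff some `L`-simulation relates `x` to `y`. -/
def LSimilar {F G : SetFunctor.{u}} (L : RelConn F G) {C D : Type u}
    (γ : C → F.obj C) (δ : D → G.obj D) : C → D → Prop :=
  fun x y => ∃ r, IsSim L γ δ r ∧ r x y

/-- Kantorovich relational connectors are relational connectors: for an
arity-preserving relation `Λ` between monotone predicate liftings of `F` and of `G`,
the assignment `L_Λ` is monotone and natural. -/
theorem kantorovich_isConnector (F G : SetFunctor.{u})
    (Λ : ∀ n : ℕ, PredLifting F n → PredLifting G n → Prop)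
    (hmono : ∀ (n : ℕ) (lam : PredLifting F n) (mu : PredLifting G n),
      Λ n lam mu → lam.IsMonotone ∧ mu.IsMonotone) :
    (kantorovich Λ).IsConnector := by
  constructor
  · intro X Y r₁ r₂ hr a b hab n lam mu hΛ A hA
    refine (hmono n lam mu hΛ).2 Y _ _ ?_ (hab n lam mu hΛ A hA)
    rintro i y ⟨x, hx, hxy⟩
    exact ⟨x, hx, hr x y hxy⟩
  · intro X X' Y Y' f g r
    funext a b
    apply propext
    have hL : ∀ x' y', rcomp (rconv (graph g)) (rcomp r (graph f)) x' y' ↔ r (f x') (g y') := by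
      intro x' y'
      constructor
      · rintro ⟨y, ⟨x, rfl, hr⟩, hg⟩
        rw [show g y' = y from hg] ; exact hr
      · intro h; exact ⟨g y', ⟨f x', rfl, h⟩, rfl⟩
    have hR : rcomp (rconv (graph (G.map (TypeCat.ofHom g)))) (rcomp ((kantorovich Λ).rel r) (graph (F.map (TypeCat.ofHom f)))) a b
        ↔ (kantorovich Λ).rel r (F.map (TypeCat.ofHom f) a) (G.map (TypeCat.ofHom g) b) := by
      constructor
      · rintro ⟨c, ⟨d, rfl, h⟩, hg⟩
        rw [show G.map (TypeCat.ofHom g) b = c from hg]; exact h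
      · intro h; exact ⟨G.map (TypeCat.ofHom g) b, ⟨F.map (TypeCat.ofHom f) a, rfl, h⟩, rfl⟩
    rw [hR]
    constructor
    · intro h n lam mu hΛ A ha
      have ha' : a ∈ lam.app X' (fun i => f ⁻¹' (A i)) := (lam.natural X' X f A a).mp ha
      have hb := h n lam mu hΛ _ ha'
      have hb' : b ∈ mu.app Y' (fun i => g ⁻¹' (rimage r (A i))) := by
        refine (hmono n lam mu hΛ).2 Y' _ _ ?_ hb
        rintro i y' ⟨x', hx', hxy⟩
        exact ⟨f x', hx', (hL x' y').mp hxy⟩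
      exact (mu.natural Y' Y g _ b).mpr hb'
    · intro h n lam mu hΛ A ha
      have ha' : a ∈ lam.app X' (fun i => f ⁻¹' (f '' (A i))) := by
        refine (hmono n lam mu hΛ).1 X' _ _ (fun i => Set.subset_preimage_image f (A i)) ha
      have ha'' : F.map (TypeCat.ofHom f) a ∈ lam.app X (fun i => f '' (A i)) :=
        (lam.natural X' X f _ a).mpr ha'
      have hb := h n lam mu hΛ _ ha''
      have hb' : b ∈ mu.app Y' (fun i => g ⁻¹' (rimage r (f '' (A i)))) :=
        (mu.natural Y' Y g _ b).mp hb
      refine (hmono n lam mu hΛ).2 Y' _ _ ?_ hb'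
      rintro i y' ⟨x, ⟨x', hx', rfl⟩, hxy⟩
      exact ⟨x', hx', (hL x' y').mpr hxy⟩
end

section
/- Let Λ be an arity-preserving relation between monotone predicate liftings of Set functors F and G, and Θ an arity-preserving relation between monotone predicate liftings of G and H. Then (1) L_Θ · L_Λ ≤ L_{Θ·Λ}, where Θ·Λ is the relational composite of the relations Λ and Θ; and (2) (L_Λ)° = L_{(Λ̄)°}, where Λ̄ = {(λ̄,μ̄) | (λ,μ) ∈ Λ} is the relation of dual predicate liftings and (−)° is relational converse. -/
open CategoryTheory

universe u

/-- (1) `L_Θ · L_Λ ≤ L_{Θ·Λ}` where `Θ·Λ` is the relational composite;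
(2) `(L_Λ)° = L_{(Λ̄)°}` where `Λ̄` is the relation of dual predicate liftings and
`(−)°` is relational converse. -/
theorem kantorovich_comp_conv (F G H : SetFunctor.{u})
    (Λ : ∀ n : ℕ, PredLifting F n → PredLifting G n → Prop)
    (Θ : ∀ n : ℕ, PredLifting G n → PredLifting H n → Prop)
    (hΛ : ∀ (n : ℕ) (lam : PredLifting F n) (mu : PredLifting G n),
      Λ n lam mu → lam.IsMonotone ∧ mu.IsMonotone)
    (hΘ : ∀ (n : ℕ) (mu : PredLifting G n) (pi : PredLifting H n),
      Θ n mu pi → mu.IsMonotone ∧ pi.IsMonotone) :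
    ((kantorovich Θ).comp (kantorovich Λ)).le
        (kantorovich (fun n lam pi => ∃ mu, Λ n lam mu ∧ Θ n mu pi)) ∧
    (kantorovich Λ).conv =
      kantorovich (fun n (mu' : PredLifting G n) (lam' : PredLifting F n) =>
        ∃ (lam : PredLifting F n) (mu : PredLifting G n),
          Λ n lam mu ∧ lam' = lam.dual ∧ mu' = mu.dual) := by
  constructor
  · rintro X Z r a c ⟨Y, t, s, rfl, b, ht, hs⟩ n lam pi ⟨mu, hlm, hmp⟩ A ha
    have hb := ht n lam mu hlm A ha
    have hc := hs n mu pi hmp _ hb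
    convert hc using 2
    funext i
    ext z
    constructor
    · rintro ⟨x, hx, y, hxy, hyz⟩
      exact ⟨y, ⟨x, hx, hxy⟩, hyz⟩
    · rintro ⟨y, ⟨x, hx, hxy⟩, hyz⟩
      exact ⟨x, hx, y, hxy, hyz⟩
  · refine congrArg RelConn.mk ?_
    funext X Y r b a
    apply propext
    constructor
    · rintro hab n mu' lam' ⟨lam, mu, hlm, rfl, rfl⟩ A hbA haL
      have h := hab n lam mu hlm (fun i => (rimage r (A i))ᶜ) haL
      refine hbA ((hΛ n lam mu hlm).2 X _ _ (fun i x hx => ?_) h)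
      rintro hxA
      obtain ⟨y, hy, hxy⟩ := hx
      exact hy ⟨x, hxA, hxy⟩
    · intro h n lam mu hlm B haB
      by_contra hnb
      have hb' : b ∈ mu.dual.app X (fun i => (rimage (rconv r) (B i))ᶜ) := by
        simpa [PredLifting.dual] using hnb
      have ha' := h n mu.dual lam.dual ⟨lam, mu, hlm, rfl, rfl⟩ _ hb'
      refine ha' ((hΛ n lam mu hlm).1 Y _ _ (fun i y hy => ?_) haB)
      rintro ⟨x, hx, hxy⟩
      exact hx ⟨y, hy, hxy⟩
end
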